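/- Let K ≤ K₁ × ⋯ × K_s be a subgroup of a direct product of groups, and let φ : K → S be a surjective homomorphism onto a nonabelian simple group S. Then there exists an index i such that φ factors through the i-th projection: there is an epimorphism ψ : πᵢ(K) → S with φ = ψ ∘ πᵢ restricted to K, where πᵢ is the projection K → Kᵢ. -/

import Mathlib

/-- If `K ≤ K₁ × ⋯ × K_s` and `φ : K → S` is a surjective homomorphism onto a nonabelian
simple group `S`, then `φ` factors through some coordinate projection `πᵢ`: there is an
epimorphism `ψ : πᵢ(K) → S` with `φ = ψ ∘ πᵢ` on `K`. -/
theorem factor_through_projection {s : ℕ} (κ : Fin s → Type*) [∀ i, Group (κ i)]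
    (K : Subgroup (∀ i, κ i)) (S : Type*) [Group S] [IsSimpleGroup S]
    (hnonabelian : ∃ a b : S, a * b ≠ b * a)
    (φ : ↥K →* S) (hφ : Function.Surjective φ) :
    ∃ i : Fin s, ∃ ψ : ↥(K.map (Pi.evalMonoidHom κ i)) →* S,
      Function.Surjective ψ ∧
      ∀ x : ↥K, φ x = ψ ⟨Pi.evalMonoidHom κ i (x : ∀ j, κ j),
        Subgroup.mem_map_of_mem _ x.2⟩ := by
  classical
  -- the kernels of coordinate projections restricted to K
  set N : Fin s → Subgroup ↥K := fun i => ((Pi.evalMonoidHom κ i).comp K.subtype).ker with hN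
  have hNnormal : ∀ i, (N i).Normal := fun i => MonoidHom.normal_ker _
  -- commutator subgroup of S is ⊤
  have hScomm : ⁅(⊤ : Subgroup S), (⊤ : Subgroup S)⁆ = ⊤ := by
    rcases IsSimpleGroup.eq_bot_or_eq_top_of_normal ⁅(⊤ : Subgroup S), (⊤ : Subgroup S)⁆
      inferInstance with h | h
    · exfalso
      obtain ⟨a, b, hab⟩ := hnonabelian
      have :=
        Subgroup.commutator_mem_commutator (Subgroup.mem_top a) (Subgroup.mem_top b)
      rw [h, Subgroup.mem_bot, commutatorElement_eq_one_iff_mul_comm] at this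
      exact hab this
    · exact h
  -- key step: some N i is contained in ker φ
  have key : ∃ i, N i ≤ φ.ker := by
    by_contra hcon
    push_neg at hcon
    have hmap : ∀ i, (N i).map φ = ⊤ := by
      intro i
      rcases IsSimpleGroup.eq_bot_or_eq_top_of_normal ((N i).map φ)
        ((hNnormal i).map φ hφ) with h | h
      · exact absurd ((Subgroup.map_eq_bot_iff (N i)).mp h) (hcon i)
      · exact h
    have hfin : ∀ t : Finset (Fin s),
        (⨅ i ∈ t, N i).Normal ∧ (⨅ i ∈ t, N i).map φ = ⊤ := by
      intro t
      induction t using Finset.induction_on with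
      | empty =>
        simp only [Finset.notMem_empty, iInf_false, iInf_top]
        refine ⟨inferInstance, ?_⟩
        rw [← MonoidHom.range_eq_map, MonoidHom.range_eq_top_of_surjective φ hφ]
      | @insert a t ha ih =>
        rw [Finset.iInf_insert]
        obtain ⟨ihn, ihm⟩ := ih
        have hnorm : (N a ⊓ ⨅ i ∈ t, N i).Normal :=
          ⟨fun n hn g => Subgroup.mem_inf.mpr
            ⟨(hNnormal a).conj_mem _ (Subgroup.mem_inf.mp hn).1 g,
             ihn.conj_mem _ (Subgroup.mem_inf.mp hn).2 g⟩⟩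
        refine ⟨hnorm, ?_⟩
        have hle : ⁅N a, ⨅ i ∈ t, N i⁆ ≤ N a ⊓ ⨅ i ∈ t, N i :=
          le_inf (Subgroup.commutator_le_left _ _) (Subgroup.commutator_le_right _ _)
        have : ⊤ ≤ (N a ⊓ ⨅ i ∈ t, N i).map φ := by
          calc (⊤ : Subgroup S) = ⁅(⊤ : Subgroup S), ⊤⁆ := hScomm.symm
          _ = ⁅(N a).map φ, (⨅ i ∈ t, N i).map φ⁆ := by rw [hmap a, ihm]
          _ = ⁅N a, ⨅ i ∈ t, N i⁆.map φ := (Subgroup.map_commutator _ _ _).symm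
          _ ≤ (N a ⊓ ⨅ i ∈ t, N i).map φ := Subgroup.map_mono hle
        exact top_le_iff.mp this
    have hbot : (⨅ i ∈ (Finset.univ : Finset (Fin s)), N i) = ⊥ := by
      rw [eq_bot_iff]
      intro x hx
      have hx' : ∀ j, (x : ∀ k, κ k) j = 1 := fun j =>
        Subgroup.mem_iInf.mp (Subgroup.mem_iInf.mp hx j) (Finset.mem_univ j)
      rw [Subgroup.mem_bot]
      exact Subtype.ext (funext hx')
    have := (hfin Finset.univ).2
    rw [hbot, Subgroup.map_bot] at this
    obtain ⟨a, b, hab⟩ := hnonabelian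
    have ha : a ∈ (⊥ : Subgroup S) := this ▸ Subgroup.mem_top a
    have hb : b ∈ (⊥ : Subgroup S) := this ▸ Subgroup.mem_top b
    rw [Subgroup.mem_bot] at ha hb
    exact hab (by rw [ha, hb])
  obtain ⟨i, hi⟩ := key
  -- the surjection from K onto the image of the projection
  let f : ↥K →* ↥(K.map (Pi.evalMonoidHom κ i)) :=
    ((Pi.evalMonoidHom κ i).comp K.subtype).codRestrict _ (fun x => ⟨x, x.2, rfl⟩)
  have hf : Function.Surjective f := by
    rintro ⟨y, x, hx, rfl⟩
    exact ⟨⟨x, hx⟩, rfl⟩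
  have hker : f.ker ≤ φ.ker := by
    intro x hx
    apply hi
    have : (f x : κ i) = 1 := by rw [hx]; rfl
    exact this
  let e := QuotientGroup.quotientKerEquivOfSurjective f hf
  let ψ : ↥(K.map (Pi.evalMonoidHom κ i)) →* S :=
    (QuotientGroup.lift f.ker φ hker).comp e.symm.toMonoidHom
  refine ⟨i, ψ, ?_, ?_⟩
  · intro z
    obtain ⟨x, hx⟩ := hφ z
    refine ⟨f x, ?_⟩
    have he : e.symm (f x) = QuotientGroup.mk x := e.symm_apply_eq.mpr rfl
    show (QuotientGroup.lift f.ker φ hker) (e.symm (f x)) = z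
    rw [he]
    exact hx
  · intro x
    have he : e.symm (f x) = QuotientGroup.mk x := e.symm_apply_eq.mpr rfl
    have : ψ (f x) = φ x := by
      show (QuotientGroup.lift f.ker φ hker) (e.symm (f x)) = φ x
      rw [he]; rfl
    convert this.symm using 2
    rfl
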